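/- Fix an integer s ≥ 2. Then limsup_{n→∞} α_s(H_2(n)) / (2^n/n) = s − 1; that is, the limit superior of the real sequence n ↦ n · α_s(H_2(n)) / 2^n equals s − 1. -/

import Mathlib

open Finset

/-- The `r`-distance graph on the Boolean cube `{0,1}^n`: two vertices are adjacent
iff their Hamming distance equals `r`. -/
def cubeGraph (n r : ℕ) : SimpleGraph (Fin n → Bool) where
  Adj x y := x ≠ y ∧ hammingDist x y = r
  symm := ⟨by
    rintro x y ⟨hne, hd⟩
    exact ⟨hne.symm, by rwa [hammingDist_comm]⟩⟩
  loopless := ⟨by rintro x ⟨hne, -⟩; exact hne rfl⟩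

/-- `S` is `K_s`-free in `G`: it contains no `s` pairwise adjacent vertices. -/
def IsKFree {V : Type*} (G : SimpleGraph V) (s : ℕ) (S : Finset V) : Prop :=
  ¬ ∃ T : Finset V, T ⊆ S ∧ T.card = s ∧ ∀ x ∈ T, ∀ y ∈ T, x ≠ y → G.Adj x y

/-- The `s`-independence number: the maximum size of a `K_s`-free vertex subset. -/
noncomputable def alphaS {V : Type*} [Fintype V] (G : SimpleGraph V) (s : ℕ) : ℕ :=
  sSup {m | ∃ S : Finset V, IsKFree G s S ∧ S.card = m}

/-- The Hamming weight (number of `true` coordinates) of a vertex of the cube. -/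
def wt {n : ℕ} (x : Fin n → Bool) : ℕ := (univ.filter fun i => x i = true).card

/-- The subgraph of `cubeGraph n r` induced on the `k`-th layer. -/
def layerGraph (n r k : ℕ) : SimpleGraph {x : Fin n → Bool // wt x = k} :=
  SimpleGraph.induce {x : Fin n → Bool | wt x = k} (cubeGraph n r)

namespace Stmt1Aux

/-! ### Generalities: Hamming distance, the coefficient map, and syndromes -/

def diffs {n : ℕ} (x y : Fin n → Bool) : Finset (Fin n) := univ.filter (fun i => x i ≠ y i)

lemma hd_eq {n : ℕ} (x y : Fin n → Bool) : hammingDist x y = (diffs x y).card := rfl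

lemma bool_ne_iff {a b : Bool} : a ≠ b ↔ b = !a := by cases a <;> cases b <;> decide

def cf {n : ℕ} (x : Fin n → Bool) (i : Fin n) : ZMod 2 := if x i then 1 else 0

lemma cf_sub {n : ℕ} (x y : Fin n → Bool) (i : Fin n) :
    cf x i - cf y i = if x i = y i then 0 else 1 := by
  unfold cf
  cases hx : x i <;> cases hy : y i <;> simp <;> decide

section Syndrome

variable {M : Type*} [AddCommGroup M] [Module (ZMod 2) M]

def syn {n : ℕ} (g : Fin n → M) (x : Fin n → Bool) : M := ∑ i, cf x i • g i

lemma syn_sub {n : ℕ} (g : Fin n → M) (x y : Fin n → Bool) :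
    syn g x - syn g y = ∑ i ∈ diffs x y, g i := by
  unfold syn
  rw [← Finset.sum_sub_distrib]
  rw [show (∑ i, (cf x i • g i - cf y i • g i)) = ∑ i, (cf x i - cf y i) • g i by
    refine Finset.sum_congr rfl fun i _ => ?_; rw [sub_smul]]
  rw [← Finset.sum_subset (Finset.subset_univ (diffs x y))
    (fun i _ hi => ?_)]
  · refine Finset.sum_congr rfl fun i hi => ?_
    rw [cf_sub]
    simp only [diffs, mem_filter] at hi
    rw [if_neg hi.2, one_smul]
  · rw [cf_sub]
    simp only [diffs, mem_filter, mem_univ, true_and, not_not] at hi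
    rw [if_pos hi, zero_smul]

def xo {n : ℕ} (x t : Fin n → Bool) : Fin n → Bool := fun i => xor (x i) (t i)

lemma cf_xo {n : ℕ} (x t : Fin n → Bool) (i : Fin n) :
    cf (xo x t) i = cf x i + cf t i := by
  unfold cf xo
  cases x i <;> cases t i <;> simp <;> decide

lemma syn_xo {n : ℕ} (g : Fin n → M) (x t : Fin n → Bool) :
    syn g (xo x t) = syn g x + syn g t := by
  unfold syn
  rw [← Finset.sum_add_distrib]
  refine Finset.sum_congr rfl fun i _ => ?_
  rw [cf_xo, add_smul]

lemma xo_xo {n : ℕ} (x t : Fin n → Bool) : xo (xo x t) t = x := by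
  funext i
  unfold xo
  cases x i <;> cases t i <;> rfl

end Syndrome

/-! ### Parity and distances -/

lemma parity_sub {n : ℕ} (x y : Fin n → Bool) :
    syn (fun _ => (1 : ZMod 2)) x - syn (fun _ => (1 : ZMod 2)) y
      = (hammingDist x y : ZMod 2) := by
  rw [syn_sub, hd_eq]
  simp

/-- Two distinct points at distance 1 from a common point are at distance 2. -/
lemma dist_two_of {n : ℕ} (x x' y : Fin n → Bool) (hx : hammingDist x y = 1)
    (hx' : hammingDist x' y = 1) (hne : x ≠ x') : hammingDist x x' = 2 := by
  have h2 : hammingDist x x' ≤ 2 := by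
    have := hammingDist_triangle x y x'
    rw [hx, hammingDist_comm y x', hx'] at this
    omega
  have h0 : hammingDist x x' ≠ 0 := by
    rw [Ne, hammingDist_eq_zero]; exact hne
  have h1 : hammingDist x x' ≠ 1 := by
    intro h
    have e1 := parity_sub x y
    have e2 := parity_sub x' y
    have e3 := parity_sub x x'
    rw [hx] at e1; rw [hx'] at e2; rw [h] at e3
    have hxx := sub_left_inj.mp (e1.trans e2.symm)
    rw [hxx, sub_self] at e3
    exact absurd e3 (by decide)
  omega

/-! ### The upper bound via double counting over spheres -/

lemma hd_update {n : ℕ} (x : Fin n → Bool) (i : Fin n) :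
    hammingDist x (Function.update x i (!x i)) = 1 := by
  have h : (univ.filter fun j => x j ≠ Function.update x i (!x i) j) = {i} := by
    ext j
    simp only [mem_filter, mem_univ, true_and, mem_singleton, Function.update_apply]
    by_cases h : j = i
    · subst h; simp
    · simp [h]
  show (univ.filter fun j => x j ≠ Function.update x i (!x i) j).card = 1
  rw [h, card_singleton]

lemma sphere_card {n : ℕ} (x : Fin n → Bool) :
    (univ.filter fun y => hammingDist x y = 1).card = n := by
  have key : (univ : Finset (Fin n)).card
      = (univ.filter fun y => hammingDist x y = 1).card := by
    apply Finset.card_bij (fun i _ => Function.update x i (!x i))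
    · intro i _
      simp [hd_update]
    · intro i _ j _ h
      by_contra hij
      have h1 : Function.update x i (!x i) i = !x i := by simp
      have h2 : Function.update x j (!x j) i = x i := by
        rw [Function.update_apply, if_neg hij]
      rw [h] at h1
      rw [h1] at h2
      exact (Bool.not_ne_self (x i)) h2
    · intro y hy
      simp only [mem_filter, mem_univ, true_and] at hy
      rw [hd_eq] at hy
      obtain ⟨i, hi⟩ := Finset.card_eq_one.mp hy
      refine ⟨i, mem_univ i, ?_⟩
      funext j
      by_cases hj : j = i
      · subst hj
        have : x j ≠ y j := by
          have : j ∈ diffs x y := by rw [hi]; exact mem_singleton_self j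
          simpa [diffs] using this
        rw [Function.update_self]
        exact (bool_ne_iff.mp this).symm
      · have : x j = y j := by
          have : j ∉ diffs x y := by rw [hi]; simpa using hj
          simpa [diffs] using this
        rw [Function.update_apply, if_neg hj, this]
  rw [← key, card_univ, Fintype.card_fin]

lemma double_count {n : ℕ} (S : Finset (Fin n → Bool)) :
    ∑ y : Fin n → Bool, (S.filter fun x => hammingDist x y = 1).card = S.card * n := by
  calc ∑ y : Fin n → Bool, (S.filter fun x => hammingDist x y = 1).card
      = ∑ y : Fin n → Bool, ∑ x ∈ S, if hammingDist x y = 1 then 1 else 0 :=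
        Finset.sum_congr rfl fun y _ => Finset.card_filter _ _
    _ = ∑ x ∈ S, ∑ y : Fin n → Bool, if hammingDist x y = 1 then 1 else 0 :=
        Finset.sum_comm
    _ = ∑ x ∈ S, n := by
        refine Finset.sum_congr rfl fun x _ => ?_
        rw [← Finset.card_filter]
        exact sphere_card x
    _ = S.card * n := by rw [Finset.sum_const, smul_eq_mul]

lemma card_le_of_kfree {n s : ℕ} (S : Finset (Fin n → Bool))
    (hS : IsKFree (cubeGraph n 2) s S) : S.card * n ≤ (s - 1) * 2 ^ n := by
  have hy : ∀ y : Fin n → Bool, (S.filter fun x => hammingDist x y = 1).card ≤ s - 1 := by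
    intro y
    by_contra hlt
    push_neg at hlt
    have hcard : s ≤ (S.filter fun x => hammingDist x y = 1).card := by omega
    obtain ⟨T, hTsub, hTcard⟩ := Finset.exists_subset_card_eq hcard
    refine hS ⟨T, hTsub.trans (Finset.filter_subset _ _), hTcard, ?_⟩
    intro a ha b hb hab
    have ha' := hTsub ha
    have hb' := hTsub hb
    simp only [mem_filter] at ha' hb'
    exact ⟨hab, dist_two_of a b y ha'.2 hb'.2 hab⟩
  calc S.card * n = ∑ y : Fin n → Bool, (S.filter fun x => hammingDist x y = 1).card :=
        (double_count S).symm
    _ ≤ ∑ _y : Fin n → Bool, (s - 1) := Finset.sum_le_sum fun y _ => hy y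
    _ = (s - 1) * 2 ^ n := by
        rw [Finset.sum_const, smul_eq_mul, card_univ, mul_comm]
        simp

lemma empty_kfree {n s : ℕ} (hs : 2 ≤ s) :
    IsKFree (cubeGraph n 2) s (∅ : Finset (Fin n → Bool)) := by
  rintro ⟨T, hT, hcard, -⟩
  rw [Finset.subset_empty.mp hT] at hcard
  simp at hcard
  omega

lemma alpha_set_nonempty {n s : ℕ} (hs : 2 ≤ s) :
    {m | ∃ S : Finset (Fin n → Bool), IsKFree (cubeGraph n 2) s S ∧ S.card = m}.Nonempty :=
  ⟨0, ∅, empty_kfree hs, rfl⟩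

lemma alpha_set_bdd {n s : ℕ} :
    BddAbove {m | ∃ S : Finset (Fin n → Bool), IsKFree (cubeGraph n 2) s S ∧ S.card = m} := by
  refine ⟨2 ^ n, fun m hm => ?_⟩
  obtain ⟨S, -, rfl⟩ := hm
  calc S.card ≤ Fintype.card (Fin n → Bool) := Finset.card_le_univ S
    _ = 2 ^ n := by simp

lemma alpha_le {n s : ℕ} (hs : 2 ≤ s) :
    alphaS (cubeGraph n 2) s * n ≤ (s - 1) * 2 ^ n := by
  have hmem := Nat.sSup_mem (alpha_set_nonempty (n := n) hs) (alpha_set_bdd (n := n) (s := s))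
  obtain ⟨S, hS, hcard⟩ := hmem
  rw [alphaS, ← hcard]
  exact card_le_of_kfree S hS

/-! ### The lower bound construction via syndromes on `n = 2 ^ m` coordinates -/

section Lower

variable (m : ℕ)

abbrev F (m : ℕ) := Fin m → ZMod 2

lemma card_F : Fintype.card (F m) = 2 ^ m := by simp

noncomputable def v : Fin (2 ^ m) ≃ F m :=
  Fintype.equivOfCardEq (by simp)

noncomputable def sig (x : Fin (2 ^ m) → Bool) : F m := syn (fun i => v m i) x

lemma z2_add_self (a : F m) : a + a = 0 := by
  funext i
  have : ∀ t : ZMod 2, t + t = 0 := by decide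
  exact this (a i)

lemma sig_ne_of_dist_two (x y : Fin (2 ^ m) → Bool) (h : hammingDist x y = 2) :
    sig m x ≠ sig m y := by
  intro heq
  have hsub : sig m x - sig m y = ∑ i ∈ diffs x y, v m i := syn_sub _ x y
  rw [heq, sub_self] at hsub
  rw [hd_eq] at h
  obtain ⟨i, j, hij, hset⟩ := Finset.card_eq_two.mp h
  rw [hset, Finset.sum_pair hij] at hsub
  have : v m i = v m j := by
    have h2 := z2_add_self m (v m j)
    calc v m i = v m i + (v m j + v m j) := by rw [h2, add_zero]
      _ = (v m i + v m j) + v m j := by rw [add_assoc]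
      _ = 0 + v m j := by rw [← hsub]
      _ = v m j := zero_add _
  exact hij ((v m).injective this)

/-- single-coordinate indicator -/
noncomputable def pt (a : F m) : Fin (2 ^ m) → Bool := fun i => decide (i = (v m).symm a)

lemma sig_pt (a : F m) : sig m (pt m a) = a := by
  unfold sig syn
  rw [Finset.sum_eq_single ((v m).symm a)]
  · have : cf (pt m a) ((v m).symm a) = 1 := by
      unfold cf pt
      simp
    rw [this, one_smul]
    simp
  · intro i _ hi
    have : cf (pt m a) i = 0 := by
      unfold cf pt
      simp [hi]
    rw [this, zero_smul]
  · intro h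
    exact absurd (mem_univ _) h

noncomputable def fib (a : F m) : Finset (Fin (2 ^ m) → Bool) :=
  univ.filter (fun x => sig m x = a)

lemma fib_card_eq (a b : F m) : (fib m a).card = (fib m b).card := by
  have key : ∀ (c d : F m) (x : Fin (2 ^ m) → Bool), sig m x = c →
      sig m (xo x (xo (pt m c) (pt m d))) = d := by
    intro c d x hx
    unfold sig at *
    rw [syn_xo, syn_xo, hx]
    show c + (sig m (pt m c) + sig m (pt m d)) = d
    rw [sig_pt, sig_pt, ← add_assoc, z2_add_self, zero_add]
  apply Finset.card_bij (fun x _ => xo x (xo (pt m a) (pt m b)))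
  · intro x hx
    simp only [fib, mem_filter, mem_univ, true_and] at hx ⊢
    exact key a b x hx
  · intro x _ y _ h
    have := congrArg (fun z => xo z (xo (pt m a) (pt m b))) h
    simpa [xo_xo] using this
  · intro y hy
    simp only [fib, mem_filter, mem_univ, true_and] at hy
    refine ⟨xo y (xo (pt m b) (pt m a)), ?_, ?_⟩
    · simp only [fib, mem_filter, mem_univ, true_and]
      exact key b a y hy
    · funext i
      unfold xo pt
      cases y i <;> cases hbi : decide (i = (v m).symm b) <;>
        cases hai : decide (i = (v m).symm a) <;> rfl

lemma fib_sum : ∑ a : F m, (fib m a).card = 2 ^ (2 ^ m) := by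
  have := Finset.card_eq_sum_card_fiberwise
    (f := sig m) (s := (univ : Finset (Fin (2 ^ m) → Bool))) (t := univ)
    (fun x _ => mem_univ _)
  rw [card_univ] at this
  simp only [Fintype.card_fun, Fintype.card_bool, Fintype.card_fin] at this
  exact this.symm

lemma fib_card_mul : (fib m 0).card * 2 ^ m = 2 ^ (2 ^ m) := by
  have h1 : ∑ a : F m, (fib m a).card = ∑ _a : F m, (fib m 0).card :=
    Finset.sum_congr rfl fun a _ => fib_card_eq m a 0
  have h2 : ∑ _a : F m, (fib m 0).card = 2 ^ m * (fib m 0).card := by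
    rw [Finset.sum_const, card_univ, card_F, smul_eq_mul]
  calc (fib m 0).card * 2 ^ m = 2 ^ m * (fib m 0).card := mul_comm _ _
    _ = ∑ _a : F m, (fib m 0).card := h2.symm
    _ = ∑ a : F m, (fib m a).card := h1.symm
    _ = 2 ^ (2 ^ m) := fib_sum m

noncomputable def SS (A : Finset (F m)) : Finset (Fin (2 ^ m) → Bool) :=
  univ.filter (fun x => sig m x ∈ A)

lemma SS_card (A : Finset (F m)) : (SS m A).card = A.card * (fib m 0).card := by
  have h := Finset.card_eq_sum_card_fiberwise (f := sig m) (s := SS m A) (t := A)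
    (fun x hx => (mem_filter.mp hx).2)
  rw [h]
  have heq : ∀ a ∈ A, ((SS m A).filter (fun x => sig m x = a)).card = (fib m 0).card := by
    intro a ha
    rw [← fib_card_eq m a 0]
    congr 1
    ext x
    simp only [SS, fib, mem_filter, mem_univ, true_and, Finset.filter_filter]
    constructor
    · rintro ⟨-, h⟩; exact h
    · intro h; exact ⟨h ▸ ha, h⟩
  rw [Finset.sum_congr rfl heq, Finset.sum_const, smul_eq_mul]

lemma SS_kfree {s : ℕ} (hs : 2 ≤ s) (A : Finset (F m)) (hA : A.card = s - 1) :
    IsKFree (cubeGraph (2 ^ m) 2) s (SS m A) := by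
  rintro ⟨T, hTsub, hTcard, hadj⟩
  have hinj : Set.InjOn (sig m) T := by
    intro x hx y hy hxy
    by_contra hne
    exact (sig_ne_of_dist_two m x y (hadj x hx y hy hne).2) hxy
  have himg : T.image (sig m) ⊆ A := by
    intro a ha
    obtain ⟨x, hx, rfl⟩ := mem_image.mp ha
    exact (mem_filter.mp (hTsub hx)).2
  have hle := Finset.card_le_card himg
  rw [Finset.card_image_of_injOn hinj, hTcard, hA] at hle
  omega

lemma alpha_ge {s : ℕ} (hs : 2 ≤ s) (hsm : s - 1 ≤ 2 ^ m) :
    (s - 1) * (fib m 0).card ≤ alphaS (cubeGraph (2 ^ m) 2) s := by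
  obtain ⟨A, -, hAcard⟩ := Finset.exists_subset_card_eq
    (s := (univ : Finset (F m))) (n := s - 1) (by rw [card_univ, card_F]; exact hsm)
  apply le_csSup alpha_set_bdd
  exact ⟨SS m A, SS_kfree m hs A hAcard, by rw [SS_card, hAcard]⟩

lemma alpha_ge' {s : ℕ} (hs : 2 ≤ s) (hsm : s - 1 ≤ 2 ^ m) :
    (s - 1) * 2 ^ (2 ^ m) ≤ 2 ^ m * alphaS (cubeGraph (2 ^ m) 2) s := by
  calc (s - 1) * 2 ^ (2 ^ m) = (s - 1) * ((fib m 0).card * 2 ^ m) := by rw [fib_card_mul]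
    _ = ((s - 1) * (fib m 0).card) * 2 ^ m := by ring
    _ ≤ alphaS (cubeGraph (2 ^ m) 2) s * 2 ^ m :=
        Nat.mul_le_mul_right _ (alpha_ge m hs hsm)
    _ = 2 ^ m * alphaS (cubeGraph (2 ^ m) 2) s := mul_comm _ _

end Lower

end Stmt1Aux

/-- **Theorem.** For fixed `s ≥ 2`,
`limsup_{n→∞} α_s(H_2(n)) / (2^n/n) = s − 1`. -/
theorem stmt1 (s : ℕ) (hs : 2 ≤ s) :
    Filter.limsup
      (fun n : ℕ => (n : ℝ) * (alphaS (cubeGraph n 2) s : ℝ) / 2 ^ n)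
      Filter.atTop = (s : ℝ) - 1 := by
  set u : ℕ → ℝ := fun n : ℕ => (n : ℝ) * (alphaS (cubeGraph n 2) s : ℝ) / 2 ^ n with hu
  have hs1 : ((s - 1 : ℕ) : ℝ) = (s : ℝ) - 1 := by
    rw [Nat.cast_sub (by omega), Nat.cast_one]
  have hub : ∀ n, u n ≤ (s : ℝ) - 1 := by
    intro n
    rw [hu]
    have hnat := Stmt1Aux.alpha_le (n := n) hs
    have hreal : ((alphaS (cubeGraph n 2) s : ℝ)) * (n : ℝ) ≤ ((s : ℝ) - 1) * 2 ^ n := by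
      rw [← hs1]
      calc ((alphaS (cubeGraph n 2) s : ℝ)) * (n : ℝ)
          = ((alphaS (cubeGraph n 2) s * n : ℕ) : ℝ) := by push_cast; ring
        _ ≤ (((s - 1) * 2 ^ n : ℕ) : ℝ) := by exact_mod_cast hnat
        _ = ((s - 1 : ℕ) : ℝ) * 2 ^ n := by push_cast; ring
    rw [div_le_iff₀ (by positivity)]
    calc (n : ℝ) * (alphaS (cubeGraph n 2) s : ℝ)
        = (alphaS (cubeGraph n 2) s : ℝ) * (n : ℝ) := mul_comm _ _
      _ ≤ ((s : ℝ) - 1) * 2 ^ n := hreal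
  have hfreq : ∃ᶠ n in Filter.atTop, (s : ℝ) - 1 ≤ u n := by
    rw [Filter.frequently_atTop]
    intro N
    set m := max N s with hm
    refine ⟨2 ^ m, ?_, ?_⟩
    · calc N ≤ m := le_max_left _ _
        _ ≤ 2 ^ m := (Nat.lt_two_pow_self (n := m)).le
    · have hsm : s - 1 ≤ 2 ^ m := by
        have h1 : s ≤ m := le_max_right _ _
        have h2 := Nat.lt_two_pow_self (n := m)
        omega
      have hnat := Stmt1Aux.alpha_ge' m hs hsm
      rw [hu]
      rw [le_div_iff₀ (by positivity)]
      calc ((s : ℝ) - 1) * 2 ^ (2 ^ m)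
          = (((s - 1) * 2 ^ (2 ^ m) : ℕ) : ℝ) := by rw [← hs1]; push_cast; ring
        _ ≤ (((2 ^ m) * alphaS (cubeGraph (2 ^ m) 2) s : ℕ) : ℝ) := by exact_mod_cast hnat
        _ = ((2 ^ m : ℕ) : ℝ) * (alphaS (cubeGraph (2 ^ m) 2) s : ℝ) := by push_cast; ring
  have hbdd : Filter.IsBoundedUnder (· ≤ ·) Filter.atTop u :=
    Filter.isBoundedUnder_of ⟨(s : ℝ) - 1, hub⟩
  have hcobdd : Filter.IsCoboundedUnder (· ≤ ·) Filter.atTop u :=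
    Filter.IsCoboundedUnder.of_frequently_ge hfreq
  exact le_antisymm
    (Filter.limsup_le_of_le hcobdd (Filter.Eventually.of_forall hub))
    (Filter.le_limsup_of_frequently_le hfreq hbdd)
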